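/- Let S be a topological group whose center Z(S) is finite and such that the quotient S/Z(S) admits an injective continuous group homomorphism into GL(V) for some finite-dimensional real vector space V. Let Λ(S) be the intersection of the kernels of all continuous group homomorphisms from S into GL(W) over all finite-dimensional real vector spaces W (the linearizer of S). Then Λ(S) is contained in Z(S), and S/Λ(S) admits an injective continuous group homomorphism into GL(U) for some finite-dimensional real vector space U. -/

import Mathlib

/-- The linearizer `Λ(S)` of a topological group `S`: the intersection of the kernels of all
continuous finite-dimensional real representations of `S` (identifying a finite-dimensional
real vector space with `ℝᵈ` and `GL(W)` with `GL_d(ℝ)`). -/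
def linearizer (S : Type*) [Group S] [TopologicalSpace S] : Subgroup S :=
  ⨅ (d : ℕ) (ρ : S →* GL (Fin d) ℝ) (_ : Continuous ρ), ρ.ker

open Matrix

/-- Block-diagonal direct sum of general linear groups. -/
def glSum (d₁ d₂ : ℕ) : GL (Fin d₁) ℝ × GL (Fin d₂) ℝ →* GL (Fin (d₁ + d₂)) ℝ where
  toFun p :=
    ⟨(fromBlocks p.1.val 0 0 p.2.val).submatrix finSumFinEquiv.symm finSumFinEquiv.symm,
     (fromBlocks (↑(p.1⁻¹)) 0 0 (↑(p.2⁻¹))).submatrix finSumFinEquiv.symm finSumFinEquiv.symm,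
     by
      rw [Matrix.submatrix_mul_equiv, Matrix.fromBlocks_multiply]
      simp only [Matrix.mul_zero, Matrix.zero_mul, add_zero, zero_add, Units.mul_inv]
      rw [Matrix.fromBlocks_one]
      exact Matrix.submatrix_one_equiv _,
     by
      rw [Matrix.submatrix_mul_equiv, Matrix.fromBlocks_multiply]
      simp only [Matrix.mul_zero, Matrix.zero_mul, add_zero, zero_add, Units.inv_mul]
      rw [Matrix.fromBlocks_one]
      exact Matrix.submatrix_one_equiv _⟩
  map_one' := Units.ext (by
    show (fromBlocks (1 : Matrix (Fin d₁) (Fin d₁) ℝ) 0 0 1).submatrix _ _ = 1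
    rw [Matrix.fromBlocks_one]
    exact Matrix.submatrix_one_equiv _)
  map_mul' p q := Units.ext (by
    show (fromBlocks (p * q).1.val 0 0 (p * q).2.val).submatrix _ _ = ((fromBlocks p.1.val 0 0 p.2.val).submatrix _ _) *
      ((fromBlocks q.1.val 0 0 q.2.val).submatrix _ _)
    rw [Matrix.submatrix_mul_equiv, Matrix.fromBlocks_multiply]
    simp)

lemma glSum_continuous (d₁ d₂ : ℕ) : Continuous (glSum d₁ d₂) := by
  rw [Units.continuous_iff]
  constructor
  · exact (((Units.continuous_val.comp continuous_fst).matrix_fromBlocks continuous_const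
      continuous_const (Units.continuous_val.comp continuous_snd)).matrix_submatrix _ _)
  · have : ∀ p : GL (Fin d₁) ℝ × GL (Fin d₂) ℝ, ↑((glSum d₁ d₂ p)⁻¹) =
        (fromBlocks (↑(p.1⁻¹)) 0 0 (↑(p.2⁻¹)) :
          Matrix (Fin d₁ ⊕ Fin d₂) (Fin d₁ ⊕ Fin d₂) ℝ).submatrix
          finSumFinEquiv.symm finSumFinEquiv.symm := fun p => rfl
    simp only [this]
    exact (((Units.continuous_coe_inv.comp continuous_fst).matrix_fromBlocks continuous_const
      continuous_const (Units.continuous_coe_inv.comp continuous_snd)).matrix_submatrix _ _)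

lemma glSum_eq_one_iff {d₁ d₂ : ℕ} {a : GL (Fin d₁) ℝ} {b : GL (Fin d₂) ℝ} :
    glSum d₁ d₂ (a, b) = 1 ↔ a = 1 ∧ b = 1 := by
  constructor
  · intro h
    have hval : (fromBlocks a.val 0 0 b.val).submatrix finSumFinEquiv.symm finSumFinEquiv.symm =
        (1 : Matrix (Fin (d₁ + d₂)) (Fin (d₁ + d₂)) ℝ) := congrArg Units.val h
    have h2 : (fromBlocks a.val 0 0 b.val) =
        (fromBlocks (1 : Matrix (Fin d₁) (Fin d₁) ℝ) 0 0 (1 : Matrix (Fin d₂) (Fin d₂) ℝ)) := by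
      rw [Matrix.fromBlocks_one]
      have := congrArg (fun M : Matrix (Fin (d₁+d₂)) (Fin (d₁+d₂)) ℝ =>
        M.submatrix finSumFinEquiv finSumFinEquiv) hval
      simp [Matrix.submatrix_submatrix, Matrix.submatrix_one_equiv,
        Function.comp_def] at this
      exact this
    refine ⟨Units.ext ?_, Units.ext ?_⟩
    · have := congrArg Matrix.toBlocks₁₁ h2
      rwa [Matrix.toBlocks_fromBlocks₁₁, Matrix.toBlocks_fromBlocks₁₁] at this
    · have := congrArg Matrix.toBlocks₂₂ h2
      rwa [Matrix.toBlocks_fromBlocks₂₂, Matrix.toBlocks_fromBlocks₂₂] at this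
  · rintro ⟨rfl, rfl⟩
    exact map_one _

lemma mem_linearizer_iff {S : Type*} [Group S] [TopologicalSpace S] {x : S} :
    x ∈ linearizer S ↔ ∀ (d : ℕ) (ρ : S →* GL (Fin d) ℝ), Continuous ρ → ρ x = 1 := by
  simp [linearizer, Subgroup.mem_iInf, MonoidHom.mem_ker]

lemma exists_sep_rep {S : Type*} [Group S] [TopologicalSpace S] (F : Finset S)
    (hF : ∀ z ∈ F, z ∉ linearizer S) :
    ∃ (e : ℕ) (τ : S →* GL (Fin e) ℝ), Continuous τ ∧ ∀ z ∈ F, τ z ≠ 1 := by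
  classical
  induction F using Finset.induction with
  | empty => exact ⟨0, 1, continuous_const, by simp⟩
  | @insert z F hzF ih =>
    obtain ⟨e, τ, hτc, hτ⟩ := ih fun w hw => hF w (Finset.mem_insert_of_mem hw)
    have hz : z ∉ linearizer S := hF z (Finset.mem_insert_self z F)
    rw [mem_linearizer_iff] at hz
    push_neg at hz
    obtain ⟨d, ρ, hρc, hρz⟩ := hz
    refine ⟨d + e, (glSum d e).comp (ρ.prod τ), ?_, ?_⟩
    · exact (glSum_continuous d e).comp (hρc.prodMk hτc)
    · intro w hw h1
      rcases Finset.mem_insert.mp hw with rfl | hw'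
      · exact hρz (glSum_eq_one_iff.mp h1).1
      · exact hτ w hw' (glSum_eq_one_iff.mp h1).2

/-- Let `S` be a topological group with finite center such that `S/Z(S)`
admits a faithful continuous finite-dimensional real representation.  Then the linearizer
`Λ(S)` is contained in the center, and `S/Λ(S)` admits a faithful continuous
finite-dimensional real representation. -/
theorem linearizer_central_and_quotient_linear
    {S : Type*} [Group S] [TopologicalSpace S] [IsTopologicalGroup S]
    (hZ : Finite (Subgroup.center S))
    (d : ℕ) (ρ : S ⧸ Subgroup.center S →* GL (Fin d) ℝ)
    (hρinj : Function.Injective ρ) (hρcont : Continuous ρ) :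
    linearizer S ≤ Subgroup.center S ∧
    ∃ hnorm : (linearizer S).Normal,
      letI := hnorm
      ∃ (e : ℕ) (σ : S ⧸ linearizer S →* GL (Fin e) ℝ),
        Function.Injective σ ∧ Continuous σ := by
  classical
  set N := Subgroup.center S with hN
  -- the composite representation of S through the quotient
  have hmkc : Continuous (QuotientGroup.mk : S → S ⧸ N) := QuotientGroup.continuous_mk
  set ρ' : S →* GL (Fin d) ℝ := ρ.comp (QuotientGroup.mk' N) with hρ'
  have hρ'c : Continuous ρ' := hρcont.comp hmkc
  -- linearizer ≤ center
  have hle : linearizer S ≤ N := by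
    intro x hx
    have : ρ' x = 1 := mem_linearizer_iff.mp hx d ρ' hρ'c
    have : ρ (QuotientGroup.mk x) = ρ 1 := by simpa [ρ'] using this
    have := hρinj this
    exact (QuotientGroup.eq_one_iff x).mp this
  have hnorm : (linearizer S).Normal := by
    constructor
    intro n hn g
    have hc := (Subgroup.mem_center_iff.mp (hle hn)) g
    have h2 : g * n * g⁻¹ = n := by rw [hc, mul_assoc, mul_inv_cancel, mul_one]
    rwa [h2]
  refine ⟨hle, hnorm, ?_⟩
  -- finite set of central elements outside the linearizer
  have hfin : {z : S | z ∈ N ∧ z ∉ linearizer S}.Finite := by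
    have : (N : Set S).Finite := Set.finite_coe_iff.mp hZ
    exact this.subset fun z hz => hz.1
  set F : Finset S := hfin.toFinset with hF
  obtain ⟨e, τ, hτc, hτ⟩ := exists_sep_rep F (by
    intro z hz
    exact ((hfin.mem_toFinset).mp hz).2)
  -- combined representation with kernel exactly the linearizer
  set σ₀ : S →* GL (Fin (d + e)) ℝ := (glSum d e).comp (ρ'.prod τ) with hσ₀
  have hσ₀c : Continuous σ₀ := (glSum_continuous d e).comp (hρ'c.prodMk hτc)
  have hker : ∀ x : S, σ₀ x = 1 ↔ x ∈ linearizer S := by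
    intro x
    constructor
    · intro hx
      have h1 : ρ' x = 1 := (glSum_eq_one_iff.mp hx).1
      have h2 : τ x = 1 := (glSum_eq_one_iff.mp hx).2
      have hxN : x ∈ N := by
        have : ρ (QuotientGroup.mk x) = ρ 1 := by simpa [ρ'] using h1
        exact (QuotientGroup.eq_one_iff x).mp (hρinj this)
      by_contra hxl
      exact hτ x (hfin.mem_toFinset.mpr ⟨hxN, hxl⟩) h2
    · intro hx
      exact mem_linearizer_iff.mp hx _ σ₀ hσ₀c
  -- descend to the quotient
  set σ : S ⧸ linearizer S →* GL (Fin (d + e)) ℝ :=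
    QuotientGroup.lift (linearizer S) σ₀ (fun x hx => (hker x).mpr hx) with hσ
  refine ⟨d + e, σ, ?_, ?_⟩
  · intro x y
    refine QuotientGroup.induction_on x fun a => QuotientGroup.induction_on y fun b hab => ?_
    have : σ₀ (a⁻¹ * b) = 1 := by
      have ha : σ (QuotientGroup.mk a) = σ₀ a := rfl
      have hb : σ (QuotientGroup.mk b) = σ₀ b := rfl
      rw [_root_.map_mul, _root_.map_inv, ← ha, ← hb, hab, inv_mul_cancel]
    exact (QuotientGroup.eq (s := linearizer S)).mpr ((hker _).mp this)
  · exact (QuotientGroup.isQuotientMap_mk (linearizer S)).continuous_iff.mpr hσ₀c
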